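/- Let f : ℝ → ℝ be α-continuous on [0,1], i.e. for every open G ⊆ ℝ the set {x ∈ [0,1] : f(x) ∈ G} is an α-set in the subspace topology of [0,1]. Then for every real q: there exists x ∈ [0,1] with f(x) > q if and only if there exists a rational r ∈ [0,1] with f(r) > q. -/
import Mathlib


theorem alphaContinuous_sup_rational (f : ℝ → ℝ)
    (hf : ∀ G : Set ℝ, IsOpen G →
      ({x : Set.Icc (0:ℝ) 1 | f ↑x ∈ G} : Set (Set.Icc (0:ℝ) 1)) ⊆
        interior (closure (interior {x : Set.Icc (0:ℝ) 1 | f ↑x ∈ G}))) :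
    ∀ q : ℝ, (∃ x ∈ Set.Icc (0:ℝ) 1, f x > q) ↔
      (∃ r : ℚ, (r : ℝ) ∈ Set.Icc (0:ℝ) 1 ∧ f r > q) := by
  intro q
  constructor
  · rintro ⟨x, hx, hfx⟩
    set S : Set (Set.Icc (0:ℝ) 1) := {y : Set.Icc (0:ℝ) 1 | f ↑y ∈ Set.Ioi q} with hS
    have hsub := hf (Set.Ioi q) isOpen_Ioi
    have hmem : (⟨x, hx⟩ : Set.Icc (0:ℝ) 1) ∈ S := hfx
    have hne : (interior S).Nonempty := by
      by_contra h
      rw [Set.not_nonempty_iff_eq_empty] at h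
      have h2 := hsub hmem
      rw [h, closure_empty, interior_empty] at h2
      exact h2
    obtain ⟨y, hy⟩ := hne
    have hopen : IsOpen (interior S) := isOpen_interior
    rw [isOpen_induced_iff] at hopen
    obtain ⟨V, hV, hVeq⟩ := hopen
    have hyV : (y : ℝ) ∈ V := by rw [← hVeq] at hy; exact hy
    obtain ⟨ε, hε, hball⟩ := Metric.isOpen_iff.mp hV _ hyV
    have hy0 : (0:ℝ) ≤ y := y.2.1
    have hy1 : (y:ℝ) ≤ 1 := y.2.2
    have key : ∃ r : ℚ, (r:ℝ) ∈ Set.Icc (0:ℝ) 1 ∧ (r:ℝ) ∈ V := by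
      rcases lt_or_eq_of_le hy1 with hlt | heq
      · obtain ⟨r, hr1, hr2⟩ := exists_rat_btwn (lt_min hlt (lt_add_of_pos_right _ hε))
        refine ⟨r, ⟨le_of_lt (lt_of_le_of_lt hy0 hr1), le_of_lt (lt_of_lt_of_le hr2 (min_le_left _ _))⟩, ?_⟩
        apply hball
        rw [Metric.mem_ball, Real.dist_eq, abs_of_pos (by linarith)]
        have := lt_of_lt_of_le hr2 (min_le_right _ _)
        linarith
      · obtain ⟨r, hr1, hr2⟩ := exists_rat_btwn
          (show max ((y:ℝ) - ε) 0 < 1 by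
            rw [max_lt_iff]; constructor <;> linarith)
        refine ⟨r, ⟨le_of_lt (lt_of_le_of_lt (le_max_right _ _) hr1), le_of_lt hr2⟩, ?_⟩
        apply hball
        rw [Metric.mem_ball, Real.dist_eq]
        have h3 : (y:ℝ) - ε < r := lt_of_le_of_lt (le_max_left _ _) hr1
        rw [abs_lt]
        constructor <;> linarith
    obtain ⟨r, hrIcc, hrV⟩ := key
    have hrS : (⟨(r:ℝ), hrIcc⟩ : Set.Icc (0:ℝ) 1) ∈ interior S := by
      rw [← hVeq]; exact hrV
    have hrS2 : (⟨(r:ℝ), hrIcc⟩ : Set.Icc (0:ℝ) 1) ∈ S := interior_subset hrS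
    exact ⟨r, hrIcc, hrS2⟩
  · rintro ⟨r, hr, hfr⟩
    exact ⟨r, hr, hfr⟩
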